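/- arXiv:math/0111309 — 2 statements merged into one kernel-verified Lean document; each statement's English description precedes it below -/
import Mathlib

section
/- Let n ≥ 1 and let w : ZMod n → ℝ be weights on the arcs of a cycle of length n. If the total sum ∑ i, w i < 0, then there exists a starting index i' such that every partial sum along the cycle starting from i' is negative; that is, for all m with 0 ≤ m ≤ n-1, ∑_{j=0}^{m} w(i' + j) < 0 (indices taken modulo n). -/
open Finset

theorem cycle_negative_total_has_determining_vertex
    (n : ℕ) [NeZero n] (w : ZMod n → ℝ)
    (h : ∑ i, w i < 0) :
    ∃ i' : ZMod n, ∀ m : ℕ, m ≤ n - 1 →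
      ∑ j ∈ Finset.range (m + 1), w (i' + (j : ZMod n)) < 0 := by
  have hn : 0 < n := Nat.pos_of_ne_zero (NeZero.ne n)
  set P : ℕ → ℝ := fun k => ∑ j ∈ range k, w (j : ZMod n) with hP
  have hPn : P n = ∑ i, w i := by
    refine Finset.sum_nbij' (fun j => (j : ZMod n)) (fun i => i.val) ?_ ?_ ?_ ?_ ?_
    · intro a _; exact Finset.mem_univ _
    · intro a _; exact Finset.mem_range.mpr (ZMod.val_lt a)
    · intro a ha; exact ZMod.val_cast_of_lt (Finset.mem_range.mp ha)
    · intro a _; exact ZMod.natCast_rightInverse a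
    · intro a _; rfl
  -- the set of maximizers of P on range n
  set s : Finset ℕ := (range n).filter (fun k => ∀ t ∈ range n, P t ≤ P k) with hs
  have hsne : s.Nonempty := by
    obtain ⟨k, hk, hkmax⟩ := Finset.exists_max_image (range n) P ⟨0, mem_range.mpr hn⟩
    exact ⟨k, Finset.mem_filter.mpr ⟨hk, hkmax⟩⟩
  set k : ℕ := s.max' hsne with hk
  have hks : k ∈ s := s.max'_mem hsne
  have hkr : k ∈ range n := (Finset.mem_filter.mp hks).1
  have hkmax : ∀ t ∈ range n, P t ≤ P k := (Finset.mem_filter.mp hks).2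
  have hklt : k < n := mem_range.mp hkr
  have hstrict : ∀ t, k < t → t < n → P t < P k := by
    intro t hkt htn
    rcases lt_or_eq_of_le (hkmax t (mem_range.mpr htn)) with h' | h'
    · exact h'
    · exfalso
      have hts : t ∈ s := Finset.mem_filter.mpr ⟨mem_range.mpr htn,
        fun u hu => h' ▸ hkmax u hu⟩
      exact absurd (s.le_max' t hts) (not_le.mpr hkt)
  have hP0 : (0:ℝ) ≤ P k := by
    have := hkmax 0 (mem_range.mpr hn)
    simpa [hP] using this
  refine ⟨(k : ZMod n), fun m hm => ?_⟩
  have hsum : ∀ a b : ℕ, ∑ j ∈ range b, w ((a : ZMod n) + (j : ZMod n))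
      = ∑ j ∈ range b, w (((a + j : ℕ) : ZMod n)) := by
    intro a b; apply Finset.sum_congr rfl; intro j _; push_cast; ring_nf
  rw [hsum]
  have hm1 : m + 1 ≤ n := by omega
  by_cases hcase : k + (m + 1) ≤ n
  · -- no wrap
    have hsplit : P (k + (m + 1)) = P k + ∑ j ∈ range (m + 1), w (((k + j : ℕ) : ZMod n)) :=
      Finset.sum_range_add (fun j => w ((j : ℕ) : ZMod n)) k (m + 1)
    have hlt : P (k + (m + 1)) < P k := by
      rcases lt_or_eq_of_le hcase with h' | h'
      · exact hstrict _ (by omega) h'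
      · rw [h', hPn]
        calc ∑ i, w i < 0 := h
          _ ≤ P k := hP0
    linarith [hsplit, hlt]
  · -- wrap around
    set c : ℕ := n - k with hc
    set d : ℕ := m + 1 - c with hd
    have hcd : m + 1 = c + d := by omega
    have hsplit2 : ∑ j ∈ range (m + 1), w (((k + j : ℕ) : ZMod n))
        = ∑ j ∈ range c, w (((k + j : ℕ) : ZMod n))
          + ∑ j ∈ range d, w (((k + (c + j) : ℕ) : ZMod n)) := by
      rw [hcd]; exact Finset.sum_range_add (fun j => w (((k + j : ℕ) : ZMod n))) c d
    have h1 : P k + ∑ j ∈ range c, w (((k + j : ℕ) : ZMod n)) = P n := by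
      have := Finset.sum_range_add (fun j => w ((j : ℕ) : ZMod n)) k c
      rw [show k + c = n by omega] at this
      linarith [this]
    have h2 : ∑ j ∈ range d, w (((k + (c + j) : ℕ) : ZMod n)) = P d := by
      apply Finset.sum_congr rfl
      intro j _
      congr 1
      have : k + (c + j) = n + j := by omega
      rw [this]
      push_cast
      simp [ZMod.natCast_self]
    have hdk : P d ≤ P k := hkmax d (mem_range.mpr (by omega))
    rw [hsplit2, h2]
    have : P n < 0 := by rw [hPn]; exact h
    linarith
end

section
/- Let w : Fin n → Fin n → ℝ be arc weights on a complete digraph on n vertices, and define for each k ≤ n the function d_k i j = minimum over all paths from i to j whose intermediate vertices all have index < k of the total path weight (with d_0 i j = w i j). Then d_{k+1} i j = min (d_k i j) (d_k i k + d_k k j), provided no cycle through vertices of index < k+1 has negative total weight. -/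
/-- `IsWalkWeight n w i j k m v x` : `v` is a walk of length `m` from `i` to `j`
whose intermediate vertices all have index `< k`, with total weight `x`. -/
def IsWalkWeight (n : ℕ) (w : Fin n → Fin n → ℝ) (i j : Fin n) (k : ℕ)
    (m : ℕ) (v : ℕ → Fin n) (x : ℝ) : Prop :=
  0 < m ∧ v 0 = i ∧ v m = j ∧ (∀ t : ℕ, 0 < t → t < m → (v t : ℕ) < k) ∧
    x = ∑ t ∈ Finset.range m, w (v t) (v (t + 1))

theorem floyd_warshall_recurrence
    (n : ℕ) (w : Fin n → Fin n → ℝ) (d : ℕ → Fin n → Fin n → ℝ)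
    (hd : ∀ k : ℕ, ∀ i j : Fin n,
      IsLeast {x : ℝ | ∃ m : ℕ, ∃ v : ℕ → Fin n, IsWalkWeight n w i j k m v x} (d k i j))
    (k : ℕ) (hk : k < n)
    (hneg : ∀ m : ℕ, ∀ v : ℕ → Fin n, 0 < m → v 0 = v m →
      (∀ t : ℕ, t ≤ m → (v t : ℕ) < k + 1) →
      0 ≤ ∑ t ∈ Finset.range m, w (v t) (v (t + 1))) :
    ∀ i j : Fin n,
      d (k + 1) i j = min (d k i j) (d k i ⟨k, hk⟩ + d k ⟨k, hk⟩ j) := by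
  intro i j
  set K : Fin n := ⟨k, hk⟩ with hKdef
  obtain ⟨⟨m, v, hm, h0, hmj, hint, hx⟩, hlb1⟩ := hd (k + 1) i j
  refine le_antisymm (le_min ?_ ?_) ?_
  · -- d (k+1) i j ≤ d k i j
    obtain ⟨⟨m', v', hm', h0', hm'j, hint', hx'⟩, _⟩ := hd k i j
    exact hlb1 ⟨m', v', hm', h0', hm'j,
      fun t ht htm => (hint' t ht htm).trans (Nat.lt_succ_self k), hx'⟩
  · -- d (k+1) i j ≤ d k i K + d k K j, by concatenation
    obtain ⟨⟨m₁, v₁, hm₁, h₁0, h₁e, h₁i, h₁x⟩, _⟩ := hd k i K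
    obtain ⟨⟨m₂, v₂, hm₂, h₂0, h₂e, h₂i, h₂x⟩, _⟩ := hd k K j
    refine hlb1 ⟨m₁ + m₂, fun s => if s < m₁ then v₁ s else v₂ (s - m₁),
      by omega, ?_, ?_, ?_, ?_⟩
    · simp [hm₁, h₁0]
    · have h1 : ¬ (m₁ + m₂ < m₁) := by omega
      simp only [h1, if_false]
      rw [show m₁ + m₂ - m₁ = m₂ by omega, h₂e]
    · intro t ht htm
      by_cases h : t < m₁
      · simp only [h, if_true]
        exact (h₁i t ht h).trans (Nat.lt_succ_self k)
      · simp only [h, if_false]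
        by_cases he : t = m₁
        · rw [he, Nat.sub_self, h₂0]
          simp [hKdef]
        · have h1 : 0 < t - m₁ := by omega
          have h2 : t - m₁ < m₂ := by omega
          exact (h₂i _ h1 h2).trans (Nat.lt_succ_self k)
    · rw [h₁x, h₂x, Finset.sum_range_add]
      congr 1
      · refine Finset.sum_congr rfl fun t htmem => ?_
        rw [Finset.mem_range] at htmem
        simp only [htmem, if_true]
        by_cases h : t + 1 < m₁
        · simp [h]
        · have he : t + 1 = m₁ := by omega
          simp only [h, if_false]
          rw [he, show m₁ - m₁ = 0 by omega, h₂0, h₁e]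
      · refine Finset.sum_congr rfl fun s hsmem => ?_
        have h1 : ¬ (m₁ + s < m₁) := by omega
        have h2 : ¬ (m₁ + s + 1 < m₁) := by omega
        simp only [h1, h2, if_false]
        rw [show m₁ + s - m₁ = s by omega, show m₁ + s + 1 - m₁ = s + 1 by omega]
  · -- min ≤ d (k+1) i j
    by_cases hc : ∃ t, 0 < t ∧ t < m ∧ (v t : ℕ) = k
    · -- the walk passes through K : split at first and last occurrence
      obtain ⟨t₀, ht₀⟩ := hc
      set T : Finset ℕ := (Finset.range m).filter (fun t => 0 < t ∧ (v t : ℕ) = k) with hT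
      have hne : T.Nonempty := ⟨t₀, by simp [hT, ht₀.1, ht₀.2.1, ht₀.2.2]⟩
      set t₁ := T.min' hne with ht₁def
      set t₂ := T.max' hne with ht₂def
      have ht₁T : t₁ ∈ T := T.min'_mem hne
      have ht₂T : t₂ ∈ T := T.max'_mem hne
      have ht₁m : t₁ < m ∧ 0 < t₁ ∧ (v t₁ : ℕ) = k := by
        simpa [hT] using ht₁T
      have ht₂m : t₂ < m ∧ 0 < t₂ ∧ (v t₂ : ℕ) = k := by
        simpa [hT] using ht₂T
      have h12 : t₁ ≤ t₂ := T.min'_le t₂ ht₂T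
      have vK₁ : v t₁ = K := Fin.ext ht₁m.2.2
      have vK₂ : v t₂ = K := Fin.ext ht₂m.2.2
      have ht2eq : t₁ + (t₂ - t₁) = t₂ := by omega
      have e1 : ∑ t ∈ Finset.range m, w (v t) (v (t + 1))
          = (∑ t ∈ Finset.range t₁, w (v t) (v (t + 1)))
            + (∑ s ∈ Finset.range (t₂ - t₁), w (v (t₁ + s)) (v (t₁ + s + 1)))
            + (∑ s ∈ Finset.range (m - t₂), w (v (t₂ + s)) (v (t₂ + s + 1))) := by
        rw [show m = t₁ + (t₂ - t₁) + (m - t₂) by omega, Finset.sum_range_add,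
          Finset.sum_range_add, ht2eq]
        simp [Nat.add_sub_cancel_left]
      have hA : d k i K ≤ ∑ t ∈ Finset.range t₁, w (v t) (v (t + 1)) := by
        refine (hd k i K).2 ⟨t₁, v, ht₁m.2.1, h0, vK₁, ?_, rfl⟩
        intro t ht htm
        have h1 : (v t : ℕ) < k + 1 := hint t ht (htm.trans ht₁m.1)
        have h2 : (v t : ℕ) ≠ k := by
          intro heq
          have : t ∈ T := by simp [hT, ht, htm.trans ht₁m.1, heq]
          exact absurd (T.min'_le t this) (by omega)
        omega
      have hC : d k K j ≤ ∑ s ∈ Finset.range (m - t₂), w (v (t₂ + s)) (v (t₂ + s + 1)) := by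
        refine (hd k K j).2 ⟨m - t₂, fun s => v (t₂ + s), by omega, by simpa using vK₂, ?_, ?_, rfl⟩
        · show v (t₂ + (m - t₂)) = j
          rw [show t₂ + (m - t₂) = m by omega, hmj]
        · intro s hs hsm
          show (v (t₂ + s) : ℕ) < k
          have h1 : (v (t₂ + s) : ℕ) < k + 1 := hint (t₂ + s) (by omega) (by omega)
          have h2 : (v (t₂ + s) : ℕ) ≠ k := by
            intro heq
            have : t₂ + s ∈ T := by
              simp only [hT, Finset.mem_filter, Finset.mem_range]
              exact ⟨by omega, by omega, heq⟩
            exact absurd (T.le_max' _ this) (by omega)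
          omega
      have hB : 0 ≤ ∑ s ∈ Finset.range (t₂ - t₁), w (v (t₁ + s)) (v (t₁ + s + 1)) := by
        rcases eq_or_lt_of_le h12 with heq | hlt
        · simp [← heq]
        · refine hneg (t₂ - t₁) (fun s => v (t₁ + s)) (by omega) ?_ ?_
          · show v (t₁ + 0) = v (t₁ + (t₂ - t₁))
            rw [Nat.add_zero, ht2eq, vK₁, vK₂]
          · intro t htle
            exact hint (t₁ + t) (by omega) (by omega)
      rw [hx, e1]
      have hmin := min_le_right (d k i j) (d k i K + d k K j)
      linarith
    · -- no intermediate vertex equals k : walk avoids K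
      push_neg at hc
      have hle : d k i j ≤ d (k + 1) i j := by
        refine (hd k i j).2 ⟨m, v, hm, h0, hmj, ?_, hx⟩
        intro t ht htm
        have h1 := hint t ht htm
        have h2 := hc t ht htm
        omega
      exact le_trans (min_le_left _ _) hle
end
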